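/- The DR pseudo-outcome γ is first-order insensitive to perturbations of any single propensity-score nuisance: fix j₀ ∈ {0,…,n} and a bounded 𝒢_{j₀}-measurable δ : Ω → ℝ, and for r in a neighborhood of 0 small enough that π_{j₀} + r·δ ≥ ε/2 P-a.s., let γ_r be obtained from γ := (∏_{j=0}^{n} 1_{A_j}/π_j)·Y + Σ_{j=0}^{n} μ_j·(1 − 1_{A_j}/π_j)·∏_{k=0}^{j−1} 1_{A_k}/π_k by replacing π_{j₀} with π_{j₀} + r·δ in every occurrence, all other nuisances held fixed. Then the map r ↦ ∫ γ_r dP is differentiable at r = 0 with derivative 0. (This is the Neyman-orthogonality of the DR pseudo-outcome with respect to the propensity scores, Lemma B.1.) -/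

import Mathlib

open MeasureTheory Finset

private lemma intAux {Ω : Type*} {F : MeasurableSpace Ω} {P : Measure Ω}
    [IsFiniteMeasure P] {g : Ω → ℝ} (hg : AEStronglyMeasurable g P) (C : ℝ)
    (h : ∀ᵐ x ∂P, |g x| ≤ C) : Integrable g P :=
  (integrable_const C).mono' hg (h.mono fun x hx => by simpa [Real.norm_eq_abs] using hx)

private lemma swapInt {Ω : Type*} {F : MeasurableSpace Ω} {P : Measure Ω}
    [IsProbabilityMeasure P] {m : MeasurableSpace Ω} (hm : m ≤ F)
    {c u v : Ω → ℝ} (hc : StronglyMeasurable[m] c)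
    (hcu : Integrable (fun x => c x * u x) P) (hcv : Integrable (fun x => c x * v x) P)
    (hu : Integrable u P) (hv : Integrable v P)
    (huv : P[u|m] =ᵐ[P] P[v|m]) :
    ∫ x, c x * u x ∂P = ∫ x, c x * v x ∂P := by
  calc ∫ x, c x * u x ∂P = ∫ x, (P[fun x => c x * u x|m]) x ∂P := (integral_condExp hm).symm
    _ = ∫ x, c x * (P[u|m]) x ∂P := integral_congr_ae (condExp_mul_of_stronglyMeasurable_left hc hcu hu)
    _ = ∫ x, c x * (P[v|m]) x ∂P :=
        integral_congr_ae (huv.mono fun x hx => by simp only [hx])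
    _ = ∫ x, (P[fun x => c x * v x|m]) x ∂P :=
        (integral_congr_ae (condExp_mul_of_stronglyMeasurable_left hc hcv hv)).symm
    _ = ∫ x, c x * v x ∂P := integral_condExp hm

private lemma prodBoundAux {s : Finset ℕ} {g : ℕ → ℝ} {B : ℝ} (hB : 1 ≤ B)
    (h : ∀ j ∈ s, |g j| ≤ B) {m : ℕ} (hs : s.card ≤ m) : |∏ j ∈ s, g j| ≤ B ^ m := by
  have hB0 : (0:ℝ) ≤ B := le_trans zero_le_one hB
  calc |∏ j ∈ s, g j| = ∏ j ∈ s, |g j| := Finset.abs_prod s g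
    _ ≤ ∏ j ∈ s, B := Finset.prod_le_prod (fun j _ => abs_nonneg _) h
    _ = B ^ s.card := Finset.prod_const B
    _ ≤ B ^ m := pow_le_pow_right₀ hB hs

set_option maxHeartbeats 2000000 in
theorem DR_pseudo_outcome_orthogonal_propensity
    {Ω : Type*} {F : MeasurableSpace Ω} {P : Measure Ω} [IsProbabilityMeasure P]
    (n : ℕ) (G : ℕ → MeasurableSpace Ω) (hG_mono : Monotone G) (hG_le : ∀ j, G j ≤ F)
    (A : ℕ → Set Ω) (hA : ∀ j ≤ n, MeasurableSet[G (j + 1)] (A j))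
    (π : ℕ → Ω → ℝ) (hπ_meas : ∀ j ≤ n, Measurable[G j] (π j))
    (ε : ℝ) (hε : 0 < ε) (hπ_bd : ∀ j ≤ n, ∀ᵐ x ∂P, ε ≤ π j x ∧ π j x ≤ 1)
    (hπ_ce : ∀ j ≤ n, π j =ᵐ[P] P[(A j).indicator (fun _ => (1 : ℝ)) | G j])
    (Y : Ω → ℝ) (hY_meas : Measurable Y) (CY : ℝ) (hY_bd : ∀ x, |Y x| ≤ CY)
    (μ : ℕ → Ω → ℝ) (hμ_meas : ∀ j ≤ n, Measurable[G j] (μ j))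
    (Cμ : ℝ) (hμ_bd : ∀ j ≤ n, ∀ x, |μ j x| ≤ Cμ)
    (hμ_n : P[fun x => (A n).indicator (fun _ => (1 : ℝ)) x * Y x | G n]
        =ᵐ[P] fun x => π n x * μ n x)
    (hμ_rec : ∀ j < n,
        P[fun x => (A j).indicator (fun _ => (1 : ℝ)) x * μ (j + 1) x | G j]
          =ᵐ[P] fun x => π j x * μ j x)
    (j₀ : ℕ) (hj₀ : j₀ ≤ n)
    (δ : Ω → ℝ) (hδ_meas : Measurable[G j₀] δ) (Cδ : ℝ) (hδ_bd : ∀ x, |δ x| ≤ Cδ)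
    (πr : ℝ → ℕ → Ω → ℝ)
    (hπr : πr = fun r j x => if j = j₀ then π j x + r * δ x else π j x)
    (γr : ℝ → Ω → ℝ)
    (hγr : γr = fun r x =>
      (∏ j ∈ range (n + 1), (A j).indicator (fun _ => (1 : ℝ)) x / πr r j x) * Y x
      + ∑ j ∈ range (n + 1),
          μ j x * (1 - (A j).indicator (fun _ => (1 : ℝ)) x / πr r j x)
            * ∏ k ∈ range j, (A k).indicator (fun _ => (1 : ℝ)) x / πr r k x) :
    HasDerivAt (fun r : ℝ => ∫ x, γr r x ∂P) 0 0 := by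
  subst hπr
  subst hγr
  -- basic measurability
  have hIm : ∀ j, j ≤ n → Measurable ((A j).indicator (fun _ => (1:ℝ))) := fun j hj =>
    measurable_const.indicator (hG_le (j+1) _ (hA j hj))
  have hImG : ∀ j m, j ≤ n → j + 1 ≤ m → Measurable[G m] ((A j).indicator (fun _ => (1:ℝ))) :=
    fun j m hj hm => (measurable_const.indicator (hA j hj)).mono (hG_mono hm) le_rfl
  have hπF : ∀ j, j ≤ n → Measurable (π j) := fun j hj => (hπ_meas j hj).mono (hG_le j) le_rfl
  have hμF : ∀ j, j ≤ n → Measurable (μ j) := fun j hj => (hμ_meas j hj).mono (hG_le j) le_rfl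
  have hδF : Measurable δ := hδ_meas.mono (hG_le j₀) le_rfl
  set e : ℕ → Ω → ℝ := fun j x => (A j).indicator (fun _ => (1:ℝ)) x / π j x with he
  have heG : ∀ j m, j ≤ n → j + 1 ≤ m → Measurable[G m] (e j) := fun j m hj hm =>
    (hImG j m hj hm).div ((hπ_meas j hj).mono (hG_mono (le_trans (Nat.le_succ j) hm)) le_rfl)
  have heF : ∀ j, j ≤ n → Measurable (e j) := fun j hj =>
    (heG j (j+1) hj le_rfl).mono (hG_le (j+1)) le_rfl
  have hprodF : ∀ s : Finset ℕ, s ⊆ range (n+1) → Measurable (fun x => ∏ k ∈ s, e k x) :=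
    fun s hs => Finset.measurable_prod s fun k hk =>
      heF k (by simpa [Nat.lt_succ_iff] using hs hk)
  -- ae facts, constants
  have hπ_ae : ∀ᵐ x ∂P, ∀ j, j ≤ n → ε ≤ π j x ∧ π j x ≤ 1 := by
    rw [ae_all_iff]; intro j
    by_cases hj : j ≤ n
    · exact (hπ_bd j hj).mono fun x h _ => h
    · exact Filter.Eventually.of_forall fun x h => absurd h hj
  have hPne : P ≠ 0 := by
    intro h
    have : (P : Measure Ω) Set.univ = 1 := measure_univ
    simp [h] at this
  haveI : (MeasureTheory.ae P).NeBot := ae_neBot.2 hPne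
  obtain ⟨x₀, hx₀⟩ := hπ_ae.exists
  have hε1 : ε ≤ 1 := le_trans (hx₀ 0 (Nat.zero_le n)).1 (hx₀ 0 (Nat.zero_le n)).2
  have hCδ : 0 ≤ Cδ := le_trans (abs_nonneg _) (hδ_bd x₀)
  have hCY : 0 ≤ CY := le_trans (abs_nonneg _) (hY_bd x₀)
  have hCμ : 0 ≤ Cμ := le_trans (abs_nonneg _) (hμ_bd 0 (Nat.zero_le n) x₀)
  have hεinv : (1:ℝ) ≤ ε⁻¹ := (one_le_inv₀ hε).2 hε1
  have hB1 : (1:ℝ) ≤ ε⁻¹ ^ (n+1) := by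
    calc (1:ℝ) = 1^(n+1) := (one_pow _).symm
      _ ≤ ε⁻¹^(n+1) := pow_le_pow_left₀ zero_le_one hεinv _
  have hB0 : (0:ℝ) ≤ ε⁻¹ ^ (n+1) := le_trans zero_le_one hB1
  have hind01 : ∀ (j : ℕ) (x : Ω),
      0 ≤ (A j).indicator (fun _ => (1:ℝ)) x ∧ (A j).indicator (fun _ => (1:ℝ)) x ≤ 1 := by
    intro j x
    by_cases hx : x ∈ A j <;> simp [Set.indicator, hx]
  have hindabs : ∀ (j : ℕ) (x : Ω), |(A j).indicator (fun _ => (1:ℝ)) x| ≤ 1 := fun j x =>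
    abs_le.2 ⟨by linarith [(hind01 j x).1], (hind01 j x).2⟩
  have habs : ∀ (a b A B : ℝ), |a| ≤ A → |b| ≤ B → |a*b| ≤ A*B := fun a b A B ha hb => by
    rw [abs_mul]
    exact mul_le_mul ha hb (abs_nonneg _) (le_trans (abs_nonneg _) ha)
  have hbe : ∀ᵐ x ∂P, ∀ j, j ≤ n → |e j x| ≤ ε⁻¹ := by
    filter_upwards [hπ_ae] with x hx j hj
    obtain ⟨h1, h2⟩ := hx j hj
    have hπpos : 0 < π j x := lt_of_lt_of_le hε h1
    simp only [he]
    rw [abs_div, abs_of_pos hπpos]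
    calc |(A j).indicator (fun _ => (1:ℝ)) x| / π j x ≤ 1 / ε :=
          div_le_div₀ zero_le_one (hindabs j x) hε h1
      _ = ε⁻¹ := one_div ε
  have hprodbd : ∀ x, (∀ j, j ≤ n → |e j x| ≤ ε⁻¹) → ∀ s : Finset ℕ, s ⊆ range (n+1) →
      |∏ k ∈ s, e k x| ≤ ε⁻¹^(n+1) := fun x hx s hs =>
    prodBoundAux hεinv (fun j hj => hx j (by simpa [Nat.lt_succ_iff] using hs hj))
      (le_trans (Finset.card_le_card hs) (by simp))
  have hInt : ∀ (g : Ω → ℝ), AEStronglyMeasurable g P → ∀ (C : ℝ),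
      (∀ᵐ x ∂P, |g x| ≤ C) → Integrable g P := fun g hg C hC => intAux hg C hC

  -- definitions
  set w : Ω → ℝ := fun x => (A j₀).indicator (fun _ => (1:ℝ)) x * δ x / π j₀ x ^ 2 with hw
  set c₀ : Ω → ℝ := fun x => (∏ k ∈ range j₀, e k x) * (δ x / π j₀ x ^ 2) with hc₀
  set WW : ℕ → Ω → ℝ := fun m => if m = n then Y else μ (m+1) with hWW
  set b : Ω → ℝ := fun x =>
      (∏ j ∈ (range (n+1)).erase j₀, e j x) * Y x
      - μ j₀ x * ∏ k ∈ range j₀, e k x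
      + ∑ j ∈ Ioc j₀ n, μ j x * (1 - e j x) * ∏ k ∈ (range j).erase j₀, e k x with hb
  set aa : Ω → ℝ := fun x =>
      (∑ j ∈ range j₀, μ j x * (1 - e j x) * ∏ k ∈ range j, e k x)
      + μ j₀ x * ∏ k ∈ range j₀, e k x with haa
  set ff : ℝ → Ω → ℝ := fun r x =>
      (A j₀).indicator (fun _ => (1:ℝ)) x / (π j₀ x + r * δ x) with hff
  set Fd : ℝ → Ω → ℝ := fun r x =>
      b x * ((0 * (π j₀ x + r * δ x) - (A j₀).indicator (fun _ => (1:ℝ)) x * (1 * δ x))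
        / (π j₀ x + r * δ x) ^ 2) with hFd
  -- subset facts
  have hsub1 : (range (n+1)).erase j₀ ⊆ range (n+1) := Finset.erase_subset _ _
  have hsub2 : range j₀ ⊆ range (n+1) := Finset.range_subset_range.2 (by omega)
  have hsub3 : ∀ m, m ≤ n → Ioc j₀ m ⊆ range (n+1) := by
    intro m hm k hk
    simp only [Finset.mem_Ioc] at hk
    simp only [Finset.mem_range]
    omega
  have hsub4 : ∀ j, j ≤ n → (range j).erase j₀ ⊆ range (n+1) := by
    intro j hj k hk
    simp only [Finset.mem_erase, Finset.mem_range] at hk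
    simp only [Finset.mem_range]
    omega
  -- more measurability
  have hwF : Measurable w := ((hIm j₀ hj₀).mul hδF).div ((hπF j₀ hj₀).pow_const 2)
  have hc₀F : Measurable c₀ :=
    (hprodF _ hsub2).mul (hδF.div ((hπF j₀ hj₀).pow_const 2))
  have hWWF : ∀ m, m ≤ n → Measurable (WW m) := by
    intro m hm
    simp only [hWW]
    split_ifs with h
    · exact hY_meas
    · exact hμF (m+1) (by omega)
  have hbF : Measurable b := by
    simp only [hb]
    apply Measurable.add
    · exact ((hprodF _ hsub1).mul hY_meas).sub ((hμF j₀ hj₀).mul (hprodF _ hsub2))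
    · refine Finset.measurable_sum _ fun j hj => ?_
      have hjn : j ≤ n := (Finset.mem_Ioc.1 hj).2
      exact ((hμF j hjn).mul (measurable_const.sub (heF j hjn))).mul (hprodF _ (hsub4 j hjn))
  have haaF : Measurable aa := by
    simp only [haa]
    apply Measurable.add
    · refine Finset.measurable_sum _ fun j hj => ?_
      have hjn : j ≤ n := by have := Finset.mem_range.1 hj; omega
      refine ((hμF j hjn).mul (measurable_const.sub (heF j hjn))).mul
        (hprodF _ (fun k hk => ?_))
      simp only [Finset.mem_range] at hk ⊢
      omega
    · exact (hμF j₀ hj₀).mul (hprodF _ hsub2)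
  -- bounds
  have hWWbd : ∀ m, m ≤ n → ∀ x, |WW m x| ≤ max CY Cμ := by
    intro m hm x
    simp only [hWW]
    split_ifs with h
    · exact le_trans (hY_bd x) (le_max_left _ _)
    · exact le_trans (hμ_bd (m+1) (by omega) x) (le_max_right _ _)
  have habs_sub : ∀ a b : ℝ, |a - b| ≤ |a| + |b| := fun a b => by
    rw [sub_eq_add_neg]
    exact le_trans (abs_add_le _ _) (by rw [abs_neg])
  have htermbd : ∀ (x : Ω), (∀ j, j ≤ n → |e j x| ≤ ε⁻¹) → ∀ (j : ℕ), j ≤ n →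
      ∀ (s : Finset ℕ), s ⊆ range (n+1) →
      |μ j x * (1 - e j x) * ∏ k ∈ s, e k x| ≤ Cμ * (1 + ε⁻¹) * ε⁻¹^(n+1) := by
    intro x hx j hj s hs
    have h1 : |1 - e j x| ≤ 1 + ε⁻¹ := by
      refine le_trans (habs_sub 1 (e j x)) ?_
      rw [abs_one]
      linarith [hx j hj]
    exact habs _ _ _ _ (habs _ _ _ _ (hμ_bd j hj x) h1) (hprodbd x hx s hs)
  have hCterm0 : (0:ℝ) ≤ Cμ * (1 + ε⁻¹) * ε⁻¹^(n+1) :=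
    mul_nonneg (mul_nonneg hCμ (by linarith)) hB0
  set Cb : ℝ := ε⁻¹^(n+1)*CY + Cμ*ε⁻¹^(n+1) + (n+1)*(Cμ*(1+ε⁻¹)*ε⁻¹^(n+1)) with hCb
  have hCb0 : 0 ≤ Cb := by
    rw [hCb]
    have : (0:ℝ) ≤ (n+1 : ℝ) := by positivity
    nlinarith [mul_nonneg hB0 hCY, mul_nonneg hCμ hB0, mul_nonneg this hCterm0]
  have hbbd : ∀ᵐ x ∂P, |b x| ≤ Cb := by
    filter_upwards [hbe] with x hx
    have hp := hprodbd x hx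
    simp only [hb, hCb]
    have hS : |∑ j ∈ Ioc j₀ n, μ j x * (1 - e j x) * ∏ k ∈ (range j).erase j₀, e k x|
        ≤ (n+1) * (Cμ * (1+ε⁻¹) * ε⁻¹^(n+1)) := by
      refine le_trans (Finset.abs_sum_le_sum_abs _ _) ?_
      refine le_trans (Finset.sum_le_sum fun j hj =>
        htermbd x hx j (Finset.mem_Ioc.1 hj).2 _ (hsub4 j (Finset.mem_Ioc.1 hj).2)) ?_
      rw [Finset.sum_const, nsmul_eq_mul, Nat.card_Ioc]
      refine mul_le_mul_of_nonneg_right ?_ hCterm0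
      exact_mod_cast Nat.le_succ_of_le (Nat.sub_le n j₀)
    have h1 : |(∏ j ∈ (range (n+1)).erase j₀, e j x) * Y x| ≤ ε⁻¹^(n+1) * CY :=
      habs _ _ _ _ (hp _ hsub1) (hY_bd x)
    have h2 : |μ j₀ x * ∏ k ∈ range j₀, e k x| ≤ Cμ * ε⁻¹^(n+1) :=
      habs _ _ _ _ (hμ_bd j₀ hj₀ x) (hp _ hsub2)
    calc |(∏ j ∈ (range (n+1)).erase j₀, e j x) * Y x
          - μ j₀ x * ∏ k ∈ range j₀, e k x
          + ∑ j ∈ Ioc j₀ n, μ j x * (1 - e j x) * ∏ k ∈ (range j).erase j₀, e k x|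
        ≤ |(∏ j ∈ (range (n+1)).erase j₀, e j x) * Y x
            - μ j₀ x * ∏ k ∈ range j₀, e k x|
          + |∑ j ∈ Ioc j₀ n, μ j x * (1 - e j x) * ∏ k ∈ (range j).erase j₀, e k x| :=
          abs_add_le _ _
      _ ≤ (|(∏ j ∈ (range (n+1)).erase j₀, e j x) * Y x|
            + |μ j₀ x * ∏ k ∈ range j₀, e k x|)
          + |∑ j ∈ Ioc j₀ n, μ j x * (1 - e j x) * ∏ k ∈ (range j).erase j₀, e k x| :=
          add_le_add_left (habs_sub _ _) _
      _ ≤ ε⁻¹^(n+1)*CY + Cμ*ε⁻¹^(n+1) + (n+1)*(Cμ*(1+ε⁻¹)*ε⁻¹^(n+1)) := by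
          refine add_le_add (add_le_add h1 h2) hS

  -- pointwise decomposition
  have hdecomp : ∀ (r : ℝ) (x : Ω),
      (∏ j ∈ range (n+1), (A j).indicator (fun _ => (1:ℝ)) x
          / (if j = j₀ then π j x + r * δ x else π j x)) * Y x
        + ∑ j ∈ range (n+1), μ j x * (1 - (A j).indicator (fun _ => (1:ℝ)) x
            / (if j = j₀ then π j x + r * δ x else π j x))
            * ∏ k ∈ range j, (A k).indicator (fun _ => (1:ℝ)) x
              / (if k = j₀ then π k x + r * δ x else π k x)
        = aa x + b x * ff r x := by
    intro r x
    have hmem : j₀ ∈ range (n+1) := Finset.mem_range.2 (by omega)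
    have hP : (∏ j ∈ range (n+1), (A j).indicator (fun _ => (1:ℝ)) x
        / (if j = j₀ then π j x + r * δ x else π j x))
        = ff r x * ∏ j ∈ (range (n+1)).erase j₀, e j x := by
      rw [← Finset.mul_prod_erase _ _ hmem]
      congr 1
      · rw [if_pos rfl]
      · exact Finset.prod_congr rfl fun k hk => by
          rw [if_neg (Finset.ne_of_mem_erase hk)]
    have hqe : ∀ k : ℕ, ¬ k = j₀ → ((A k).indicator (fun _ => (1:ℝ)) x
        / (if k = j₀ then π k x + r * δ x else π k x)) = e k x := fun k hk => by
      rw [if_neg hk]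
    have hq0 : ((A j₀).indicator (fun _ => (1:ℝ)) x
        / (if j₀ = j₀ then π j₀ x + r * δ x else π j₀ x)) = ff r x := by
      rw [if_pos rfl]
    have hS : (∑ j ∈ range (n+1), μ j x * (1 - (A j).indicator (fun _ => (1:ℝ)) x
          / (if j = j₀ then π j x + r * δ x else π j x))
          * ∏ k ∈ range j, (A k).indicator (fun _ => (1:ℝ)) x
            / (if k = j₀ then π k x + r * δ x else π k x))
        = (∑ j ∈ range j₀, μ j x * (1 - e j x) * ∏ k ∈ range j, e k x)
          + μ j₀ x * (1 - ff r x) * ∏ k ∈ range j₀, e k x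
          + ff r x * ∑ j ∈ Ioc j₀ n, μ j x * (1 - e j x)
              * ∏ k ∈ (range j).erase j₀, e k x := by
      rw [Finset.range_eq_Ico,
        ← Finset.sum_Ico_consecutive _ (Nat.zero_le (j₀+1)) (by omega : j₀+1 ≤ n+1),
        Finset.sum_Ico_succ_top (Nat.zero_le j₀), Finset.Ico_add_one_add_one_eq_Ioc, ← Finset.range_eq_Ico]
      congr 1
      congr 1
      · refine Finset.sum_congr rfl fun j hj => ?_
        have hj' : j < j₀ := Finset.mem_range.1 hj
        rw [hqe j (by omega),
          Finset.prod_congr rfl fun k hk => hqe k (by have := Finset.mem_range.1 hk; omega)]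
      · rw [hq0,
          Finset.prod_congr rfl fun k hk => hqe k (by have := Finset.mem_range.1 hk; omega)]
      · rw [Finset.mul_sum]
        refine Finset.sum_congr rfl fun j hj => ?_
        obtain ⟨h1, h2⟩ := Finset.mem_Ioc.1 hj
        rw [hqe j (by omega),
          ← Finset.mul_prod_erase _ _ (Finset.mem_range.2 (by omega : j₀ < j)), hq0,
          Finset.prod_congr rfl fun k hk => hqe k (Finset.ne_of_mem_erase hk)]
        ring
    rw [hP, hS]
    simp only [haa, hb]
    ring
  -- neighborhood and derivative facts
  set ρ : ℝ := ε / (2 * (Cδ + 1)) with hρdef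
  have hρ : 0 < ρ := by rw [hρdef]; positivity
  have hgood : ∀ᵐ x ∂P, ∀ r ∈ Metric.ball (0:ℝ) ρ, ε/2 ≤ π j₀ x + r * δ x := by
    filter_upwards [hπ_ae] with x hx r hr
    have h1 := (hx j₀ hj₀).1
    have hrabs : |r| < ρ := by simpa [Metric.mem_ball, Real.dist_eq] using hr
    have h2 : |r * δ x| ≤ ρ * Cδ := by
      rw [abs_mul]
      exact mul_le_mul hrabs.le (hδ_bd x) (abs_nonneg _) hρ.le
    have h3 : ρ * (Cδ + 1) = ε/2 := by
      rw [hρdef]; field_simp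
    have h4 : ρ * Cδ ≤ ε/2 := by nlinarith [hρ.le]
    have h5 := (abs_le.1 (le_trans h2 h4)).1
    linarith
  have hdiff : ∀ᵐ x ∂P, ∀ r ∈ Metric.ball (0:ℝ) ρ,
      HasDerivAt (fun r => b x * ff r x) (Fd r x) r := by
    filter_upwards [hgood] with x hx r hr
    have hne : π j₀ x + r * δ x ≠ 0 := ne_of_gt (lt_of_lt_of_le (by linarith) (hx r hr))
    have hd1 : HasDerivAt (fun r : ℝ => π j₀ x + r * δ x) (1 * δ x) r :=
      ((hasDerivAt_id r).mul_const (δ x)).const_add (π j₀ x)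
    have hd2 := (hasDerivAt_const r ((A j₀).indicator (fun _ => (1:ℝ)) x)).div hd1 hne
    have hd3 := hd2.const_mul (b x)
    simp only [hff, hFd]
    exact hd3
  have hboundF : ∀ᵐ x ∂P, ∀ r ∈ Metric.ball (0:ℝ) ρ,
      ‖Fd r x‖ ≤ Cb * (Cδ / (ε/2)^2) := by
    filter_upwards [hgood, hbbd] with x hx hbx r hr
    have h1 := hx r hr
    have hpos : 0 < π j₀ x + r * δ x := lt_of_lt_of_le (by linarith) h1
    simp only [hFd, Real.norm_eq_abs]
    have hrw : (0 * (π j₀ x + r * δ x) - (A j₀).indicator (fun _ => (1:ℝ)) x * (1 * δ x))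
        / (π j₀ x + r * δ x)^2
        = -((A j₀).indicator (fun _ => (1:ℝ)) x * δ x / (π j₀ x + r * δ x)^2) := by ring
    rw [hrw, abs_mul, abs_neg, abs_div]
    refine mul_le_mul hbx ?_ (by positivity) hCb0
    rw [abs_of_pos (by positivity : (0:ℝ) < (π j₀ x + r * δ x)^2)]
    refine div_le_div₀ hCδ ?_ (by positivity : (0:ℝ) < (ε/2)^2) ?_
    · refine le_trans (habs _ _ 1 Cδ (hindabs j₀ x) (hδ_bd x)) (by rw [one_mul])
    · exact pow_le_pow_left₀ (by linarith) h1 2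
  have hffF : ∀ r : ℝ, Measurable (ff r) := fun r => by
    simp only [hff]
    exact (hIm j₀ hj₀).div ((hπF j₀ hj₀).add (hδF.const_mul r))
  have hintFr : ∀ r ∈ Metric.ball (0:ℝ) ρ, Integrable (fun x => b x * ff r x) P := by
    intro r hr
    refine hInt _ ((hbF.mul (hffF r)).aestronglyMeasurable) (Cb * (2/ε)) ?_
    filter_upwards [hgood, hbbd] with x hx hbx
    have h1 := hx r hr
    have hpos : 0 < π j₀ x + r * δ x := lt_of_lt_of_le (by linarith) h1
    have hffb : |ff r x| ≤ 2/ε := by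
      simp only [hff]
      rw [abs_div, abs_of_pos hpos]
      calc |(A j₀).indicator (fun _ => (1:ℝ)) x| / (π j₀ x + r * δ x)
          ≤ 1 / (ε/2) := div_le_div₀ zero_le_one (hindabs j₀ x) (by linarith) h1
        _ = 2/ε := by field_simp
    exact habs _ _ _ _ hbx hffb
  have hmeasFd0 : AEStronglyMeasurable (Fd 0) P := by
    simp only [hFd]
    refine (hbF.mul (Measurable.div ?_ ?_)).aestronglyMeasurable
    · exact (measurable_const.mul ((hπF j₀ hj₀).add (hδF.const_mul 0))).sub
        ((hIm j₀ hj₀).mul (hδF.const_mul 1))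
    · exact ((hπF j₀ hj₀).add (hδF.const_mul 0)).pow_const 2
  have HH := hasDerivAt_integral_of_dominated_loc_of_deriv_le
    (F := fun r x => b x * ff r x) (F' := Fd) (x₀ := (0:ℝ))
    (bound := fun _ => Cb * (Cδ / (ε/2)^2)) (Metric.ball_mem_nhds _ hρ)
    (Filter.Eventually.of_forall fun r => (hbF.mul (hffF r)).aestronglyMeasurable)
    (hintFr 0 (Metric.mem_ball_self hρ)) hmeasFd0 hboundF (integrable_const _) hdiff
  have hzero : ∫ x, Fd 0 x ∂P = 0 := by
    -- strong measurability of c₀ w.r.t. G j₀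
    have hc₀G : StronglyMeasurable[G j₀] c₀ := by
      rw [hc₀]
      refine Measurable.stronglyMeasurable ?_
      refine Measurable.mul ?_ (hδ_meas.div ((hπ_meas j₀ hj₀).pow_const 2))
      exact Finset.measurable_prod _ fun k hk => by
        have hk' : k < j₀ := Finset.mem_range.1 hk
        exact heG k j₀ (by omega) (by omega)
    have hdd : ∀ x, ε ≤ π j₀ x → |δ x / π j₀ x ^ 2| ≤ Cδ / ε^2 := by
      intro x h1
      rw [abs_div, abs_of_pos (by nlinarith : (0:ℝ) < π j₀ x ^ 2)]
      exact div_le_div₀ hCδ (hδ_bd x) (by positivity) (by nlinarith)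
    have hc₀bd : ∀ᵐ x ∂P, |c₀ x| ≤ ε⁻¹^(n+1) * (Cδ/ε^2) := by
      filter_upwards [hbe, hπ_ae] with x hx hxp
      simp only [hc₀]
      exact habs _ _ _ _ (hprodbd x hx _ hsub2) (hdd x (hxp j₀ hj₀).1)
    have hwbd : ∀ᵐ x ∂P, |w x| ≤ Cδ/ε^2 := by
      filter_upwards [hπ_ae] with x hxp
      have h1 := (hxp j₀ hj₀).1
      simp only [hw]
      rw [abs_div, abs_of_pos (by nlinarith : (0:ℝ) < π j₀ x ^2)]
      refine div_le_div₀ hCδ ?_ (by positivity) (by nlinarith)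
      exact le_trans (habs _ _ 1 Cδ (hindabs j₀ x) (hδ_bd x)) (by rw [one_mul])
    have hintπμ : Integrable (fun x => π j₀ x * μ j₀ x) P := by
      refine hInt _ (((hπF j₀ hj₀).mul (hμF j₀ hj₀)).aestronglyMeasurable) (1*Cμ) ?_
      filter_upwards [hπ_ae] with x hxp
      exact habs _ _ _ _ (abs_le.2 ⟨by nlinarith [(hxp j₀ hj₀).1], (hxp j₀ hj₀).2⟩)
        (hμ_bd j₀ hj₀ x)
    have hv_eq : P[(fun x => π j₀ x * μ j₀ x)|G j₀] = fun x => π j₀ x * μ j₀ x :=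
      condExp_of_stronglyMeasurable (hG_le j₀)
        (((hπ_meas j₀ hj₀).mul (hμ_meas j₀ hj₀)).stronglyMeasurable) hintπμ
    have hc₀πμ_int : Integrable (fun x => c₀ x * (π j₀ x * μ j₀ x)) P := by
      refine hInt _ ((hc₀F.mul ((hπF j₀ hj₀).mul (hμF j₀ hj₀))).aestronglyMeasurable)
        (ε⁻¹^(n+1) * (Cδ/ε^2) * (1*Cμ)) ?_
      filter_upwards [hc₀bd, hπ_ae] with x h2 h3
      exact habs _ _ _ _ h2 (habs _ _ _ _
        (abs_le.2 ⟨by nlinarith [(h3 j₀ hj₀).1], (h3 j₀ hj₀).2⟩) (hμ_bd j₀ hj₀ x))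
    have hceW : ∀ m, m ≤ n →
        P[fun x => (A m).indicator (fun _ => (1:ℝ)) x * WW m x|G m]
          =ᵐ[P] fun x => π m x * μ m x := by
      intro m hmn
      rcases eq_or_ne m n with hcn | hcn
      · have hWn : WW m = Y := by rw [hWW]; simp [hcn]
        rw [hWn, hcn]
        exact hμ_n
      · have hWm : WW m = μ (m+1) := by rw [hWW]; simp [hcn]
        rw [hWm]
        exact hμ_rec m (by omega)
    have hceμ : ∀ m, m ≤ n → P[μ m|G m] = μ m := fun m hm =>
      condExp_of_stronglyMeasurable (hG_le m) ((hμ_meas m hm).stronglyMeasurable)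
        (hInt _ ((hμF m hm).aestronglyMeasurable) Cμ (Filter.Eventually.of_forall (hμ_bd m hm)))
    have hce1 : ∀ j, j ≤ n → P[e j|G j] =ᵐ[P] fun _ => (1:ℝ) := by
      intro j hj
      have hrw : e j = fun x => (π j x)⁻¹ * (A j).indicator (fun _ => (1:ℝ)) x := by
        funext x
        simp only [he]
        rw [div_eq_inv_mul]
      have hint1 : Integrable (fun x => (π j x)⁻¹ * (A j).indicator (fun _ => (1:ℝ)) x) P := by
        rw [← hrw]
        refine hInt _ ((heF j hj).aestronglyMeasurable) ε⁻¹ ?_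
        filter_upwards [hbe] with x hx using hx j hj
      have hint2 : Integrable ((A j).indicator (fun _ => (1:ℝ))) P :=
        hInt _ ((hIm j hj).aestronglyMeasurable) 1
          (Filter.Eventually.of_forall fun x => hindabs j x)
      have h1 := condExp_mul_of_stronglyMeasurable_left (m := G j)
        ((hπ_meas j hj).inv.stronglyMeasurable) hint1 hint2
      rw [hrw]
      refine h1.trans ?_
      filter_upwards [hπ_ce j hj, hπ_ae] with x h2 h3
      simp only [Pi.mul_apply]
      rw [← h2]
      exact inv_mul_cancel₀ (ne_of_gt (lt_of_lt_of_le hε (h3 j hj).1))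
    -- the correction terms vanish
    have hT3 : ∀ j ∈ Ioc j₀ n,
        ∫ x, (μ j x * (∏ k ∈ (range j).erase j₀, e k x) * w x) * (1 - e j x) ∂P = 0 := by
      intro j hj
      obtain ⟨hj1, hj2⟩ := Finset.mem_Ioc.1 hj
      have hCmeas : StronglyMeasurable[G j]
          (fun x => μ j x * (∏ k ∈ (range j).erase j₀, e k x) * w x) := by
        refine Measurable.stronglyMeasurable ?_
        refine Measurable.mul (Measurable.mul (hμ_meas j hj2) ?_) ?_
        · exact Finset.measurable_prod _ fun k hk => by
            have hk' : k < j := Finset.mem_range.1 (Finset.mem_of_mem_erase hk)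
            exact heG k j (by omega) (by omega)
        · rw [hw]
          exact ((hImG j₀ j hj₀ (by omega)).mul (hδ_meas.mono (hG_mono hj1.le) le_rfl)).div
            (((hπ_meas j₀ hj₀).mono (hG_mono hj1.le) le_rfl).pow_const 2)
      have hCF : Measurable (fun x => μ j x * (∏ k ∈ (range j).erase j₀, e k x) * w x) :=
        ((hμF j hj2).mul (hprodF _ (hsub4 j hj2))).mul hwF
      have hCbd : ∀ᵐ x ∂P, |μ j x * (∏ k ∈ (range j).erase j₀, e k x) * w x|
          ≤ Cμ * ε⁻¹^(n+1) * (Cδ/ε^2) := by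
        filter_upwards [hbe, hwbd] with x hx hwx
        exact habs _ _ _ _ (habs _ _ _ _ (hμ_bd j hj2 x) (hprodbd x hx _ (hsub4 j hj2))) hwx
      have hint1 : Integrable
          (fun x => (μ j x * (∏ k ∈ (range j).erase j₀, e k x) * w x) * e j x) P := by
        refine hInt _ ((hCF.mul (heF j hj2)).aestronglyMeasurable)
          (Cμ * ε⁻¹^(n+1) * (Cδ/ε^2) * ε⁻¹) ?_
        filter_upwards [hCbd, hbe] with x h1 h2
        exact habs _ _ _ _ h1 (h2 j hj2)
      have hint2 : Integrable
          (fun x => (μ j x * (∏ k ∈ (range j).erase j₀, e k x) * w x) * (fun _ => (1:ℝ)) x) P := by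
        refine hInt _ ((hCF.mul measurable_const).aestronglyMeasurable)
          (Cμ * ε⁻¹^(n+1) * (Cδ/ε^2) * 1) ?_
        filter_upwards [hCbd] with x h1
        exact habs _ _ _ _ h1 (by norm_num)
      have hint3 : Integrable (e j) P := by
        refine hInt _ ((heF j hj2).aestronglyMeasurable) ε⁻¹ ?_
        filter_upwards [hbe] with x hx using hx j hj2
      have huv : P[e j|G j] =ᵐ[P] P[(fun _ => (1:ℝ))|G j] := by
        refine (hce1 j hj2).trans ?_
        rw [condExp_const (hG_le j)]
      have hswap := swapInt (hG_le j) hCmeas hint1 hint2 hint3 (integrable_const 1) huv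
      have heq : ∫ x, (μ j x * (∏ k ∈ (range j).erase j₀, e k x) * w x) * (1 - e j x) ∂P
          = (∫ x, (μ j x * (∏ k ∈ (range j).erase j₀, e k x) * w x) * (fun _ => (1:ℝ)) x ∂P)
            - ∫ x, (μ j x * (∏ k ∈ (range j).erase j₀, e k x) * w x) * e j x ∂P := by
        rw [← integral_sub hint2 hint1]
        exact integral_congr_ae (Filter.Eventually.of_forall fun x => by simp only; ring)
      rw [heq, ← hswap, sub_self]
    -- the j₀ term
    have hμi_int : Integrable (fun x => μ j₀ x * (A j₀).indicator (fun _ => (1:ℝ)) x) P := by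
      refine hInt _ (((hμF j₀ hj₀).mul (hIm j₀ hj₀)).aestronglyMeasurable) (Cμ*1) ?_
      exact Filter.Eventually.of_forall fun x =>
        habs _ _ _ _ (hμ_bd j₀ hj₀ x) (hindabs j₀ x)
    have hi_int : Integrable ((A j₀).indicator (fun _ => (1:ℝ))) P :=
      hInt _ ((hIm j₀ hj₀).aestronglyMeasurable) 1
        (Filter.Eventually.of_forall fun x => hindabs j₀ x)
    have hintT2 : Integrable (fun x => c₀ x * (μ j₀ x * (A j₀).indicator (fun _ => (1:ℝ)) x)) P := by
      refine hInt _ ((hc₀F.mul ((hμF j₀ hj₀).mul (hIm j₀ hj₀))).aestronglyMeasurable)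
        (ε⁻¹^(n+1) * (Cδ/ε^2) * (Cμ*1)) ?_
      filter_upwards [hc₀bd] with x h2
      exact habs _ _ _ _ h2 (habs _ _ _ _ (hμ_bd j₀ hj₀ x) (hindabs j₀ x))
    have hT2 : ∫ x, c₀ x * (μ j₀ x * (A j₀).indicator (fun _ => (1:ℝ)) x) ∂P
        = ∫ x, c₀ x * (π j₀ x * μ j₀ x) ∂P := by
      have h1 := condExp_mul_of_stronglyMeasurable_left (m := G j₀)
        ((hμ_meas j₀ hj₀).stronglyMeasurable) hμi_int hi_int
      have huv : P[fun x => μ j₀ x * (A j₀).indicator (fun _ => (1:ℝ)) x|G j₀]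
          =ᵐ[P] P[fun x => π j₀ x * μ j₀ x|G j₀] := by
        refine h1.trans ?_
        rw [hv_eq]
        filter_upwards [hπ_ce j₀ hj₀] with x hx
        simp only [Pi.mul_apply]
        rw [← hx]
        ring
      exact swapInt (hG_le j₀) hc₀G hintT2 hc₀πμ_int hμi_int hintπμ huv
    -- the telescoping identity
    have TEL : ∀ m, j₀ ≤ m → m ≤ n →
        ∫ x, c₀ x * ((A j₀).indicator (fun _ => (1:ℝ)) x
            * ((∏ k ∈ Ioc j₀ m, e k x) * WW m x)) ∂P
          = ∫ x, c₀ x * (π j₀ x * μ j₀ x) ∂P := by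
      intro m hm
      induction m, hm using Nat.le_induction with
      | base =>
        intro hn
        have h1 : ∀ x : Ω, c₀ x * ((A j₀).indicator (fun _ => (1:ℝ)) x
            * ((∏ k ∈ Ioc j₀ j₀, e k x) * WW j₀ x))
            = c₀ x * ((A j₀).indicator (fun _ => (1:ℝ)) x * WW j₀ x) := fun x => by
          rw [Finset.Ioc_self, Finset.prod_empty, one_mul]
        rw [integral_congr_ae (Filter.Eventually.of_forall h1)]
        have hiW_int : Integrable (fun x => (A j₀).indicator (fun _ => (1:ℝ)) x * WW j₀ x) P := by
          refine hInt _ (((hIm j₀ hj₀).mul (hWWF j₀ hn)).aestronglyMeasurable)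
            (1 * max CY Cμ) ?_
          exact Filter.Eventually.of_forall fun x =>
            habs _ _ _ _ (hindabs j₀ x) (hWWbd j₀ hn x)
        have huv : P[fun x => (A j₀).indicator (fun _ => (1:ℝ)) x * WW j₀ x|G j₀]
            =ᵐ[P] P[fun x => π j₀ x * μ j₀ x|G j₀] := by
          refine (hceW j₀ hn).trans ?_
          rw [hv_eq]
        refine swapInt (hG_le j₀) hc₀G ?_ hc₀πμ_int hiW_int hintπμ huv
        refine hInt _ ((hc₀F.mul ((hIm j₀ hj₀).mul (hWWF j₀ hn))).aestronglyMeasurable)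
          (ε⁻¹^(n+1) * (Cδ/ε^2) * (1 * max CY Cμ)) ?_
        filter_upwards [hc₀bd] with x h2
        exact habs _ _ _ _ h2 (habs _ _ _ _ (hindabs j₀ x) (hWWbd j₀ hn x))
      | succ m hm ih =>
        intro hn
        have hmn : m ≤ n := by omega
        have hstep1 : ∀ x : Ω, c₀ x * ((A j₀).indicator (fun _ => (1:ℝ)) x
            * ((∏ k ∈ Ioc j₀ (m+1), e k x) * WW (m+1) x))
            = (c₀ x * ((A j₀).indicator (fun _ => (1:ℝ)) x * ∏ k ∈ Ioc j₀ m, e k x))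
              * (e (m+1) x * WW (m+1) x) := fun x => by
          rw [Finset.prod_Ioc_succ_top hm]
          ring
        rw [integral_congr_ae (Filter.Eventually.of_forall hstep1)]
        have hCmeas : StronglyMeasurable[G (m+1)]
            (fun x => c₀ x * ((A j₀).indicator (fun _ => (1:ℝ)) x * ∏ k ∈ Ioc j₀ m, e k x)) := by
          refine Measurable.stronglyMeasurable ?_
          refine Measurable.mul (hc₀G.measurable.mono (hG_mono (by omega : j₀ ≤ m+1)) le_rfl) ?_
          refine Measurable.mul (hImG j₀ (m+1) hj₀ (by omega)) ?_
          exact Finset.measurable_prod _ fun k hk => by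
            obtain ⟨hk1, hk2⟩ := Finset.mem_Ioc.1 hk
            exact heG k (m+1) (by omega) (by omega)
        have hCF : Measurable
            (fun x => c₀ x * ((A j₀).indicator (fun _ => (1:ℝ)) x * ∏ k ∈ Ioc j₀ m, e k x)) :=
          hc₀F.mul ((hIm j₀ hj₀).mul (hprodF _ (hsub3 m hmn)))
        have hCbd : ∀ᵐ x ∂P, |c₀ x * ((A j₀).indicator (fun _ => (1:ℝ)) x
            * ∏ k ∈ Ioc j₀ m, e k x)| ≤ ε⁻¹^(n+1) * (Cδ/ε^2) * (1 * ε⁻¹^(n+1)) := by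
          filter_upwards [hc₀bd, hbe] with x h1 h2
          exact habs _ _ _ _ h1 (habs _ _ _ _ (hindabs j₀ x) (hprodbd x h2 _ (hsub3 m hmn)))
        have hu_int : Integrable (fun x => e (m+1) x * WW (m+1) x) P := by
          refine hInt _ (((heF (m+1) hn).mul (hWWF (m+1) hn)).aestronglyMeasurable)
            (ε⁻¹ * max CY Cμ) ?_
          filter_upwards [hbe] with x hx
          exact habs _ _ _ _ (hx (m+1) hn) (hWWbd (m+1) hn x)
        have hμ1_int : Integrable (μ (m+1)) P :=
          hInt _ ((hμF (m+1) hn).aestronglyMeasurable) Cμ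
            (Filter.Eventually.of_forall (hμ_bd (m+1) hn))
        have hcu_int : Integrable (fun x =>
            (c₀ x * ((A j₀).indicator (fun _ => (1:ℝ)) x * ∏ k ∈ Ioc j₀ m, e k x))
              * (e (m+1) x * WW (m+1) x)) P := by
          refine hInt _ ((hCF.mul ((heF (m+1) hn).mul (hWWF (m+1) hn))).aestronglyMeasurable)
            (ε⁻¹^(n+1) * (Cδ/ε^2) * (1 * ε⁻¹^(n+1)) * (ε⁻¹ * max CY Cμ)) ?_
          filter_upwards [hCbd, hbe] with x h1 h2
          exact habs _ _ _ _ h1 (habs _ _ _ _ (h2 (m+1) hn) (hWWbd (m+1) hn x))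
        have hcv_int : Integrable (fun x =>
            (c₀ x * ((A j₀).indicator (fun _ => (1:ℝ)) x * ∏ k ∈ Ioc j₀ m, e k x))
              * μ (m+1) x) P := by
          refine hInt _ ((hCF.mul (hμF (m+1) hn)).aestronglyMeasurable)
            (ε⁻¹^(n+1) * (Cδ/ε^2) * (1 * ε⁻¹^(n+1)) * Cμ) ?_
          filter_upwards [hCbd] with x h1
          exact habs _ _ _ _ h1 (hμ_bd (m+1) hn x)
        have huv : P[fun x => e (m+1) x * WW (m+1) x|G (m+1)] =ᵐ[P] P[μ (m+1)|G (m+1)] := by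
          have hrw : (fun x => e (m+1) x * WW (m+1) x)
              = fun x => (π (m+1) x)⁻¹
                  * ((A (m+1)).indicator (fun _ => (1:ℝ)) x * WW (m+1) x) := by
            funext x
            simp only [he]
            ring
          have hiW_int2 : Integrable
              (fun x => (A (m+1)).indicator (fun _ => (1:ℝ)) x * WW (m+1) x) P := by
            refine hInt _ (((hIm (m+1) hn).mul (hWWF (m+1) hn)).aestronglyMeasurable)
              (1 * max CY Cμ) ?_
            exact Filter.Eventually.of_forall fun x =>
              habs _ _ _ _ (hindabs (m+1) x) (hWWbd (m+1) hn x)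
          have hint1 : Integrable (fun x => (π (m+1) x)⁻¹
              * ((A (m+1)).indicator (fun _ => (1:ℝ)) x * WW (m+1) x)) P := by
            rw [← hrw]
            exact hu_int
          rw [hrw]
          have h1 := condExp_mul_of_stronglyMeasurable_left (m := G (m+1))
            ((hπ_meas (m+1) hn).inv.stronglyMeasurable) hint1 hiW_int2
          refine h1.trans ?_
          rw [hceμ (m+1) hn]
          filter_upwards [hceW (m+1) hn, hπ_ae] with x h2 h3
          simp only [Pi.mul_apply]
          rw [h2]
          have hne : π (m+1) x ≠ 0 := ne_of_gt (lt_of_lt_of_le hε (h3 (m+1) hn).1)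
          rw [Pi.inv_apply, ← mul_assoc, inv_mul_cancel₀ hne, one_mul]
        have hswap := swapInt (hG_le (m+1)) hCmeas hcu_int hcv_int hu_int hμ1_int huv
        rw [hswap]
        have hback : ∀ x : Ω,
            (c₀ x * ((A j₀).indicator (fun _ => (1:ℝ)) x * ∏ k ∈ Ioc j₀ m, e k x)) * μ (m+1) x
            = c₀ x * ((A j₀).indicator (fun _ => (1:ℝ)) x
                * ((∏ k ∈ Ioc j₀ m, e k x) * WW m x)) := fun x => by
          have hWm : WW m = μ (m+1) := by rw [hWW]; simp [show m ≠ n by omega]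
          rw [hWm]
          ring
        rw [integral_congr_ae (Filter.Eventually.of_forall hback)]
        exact ih hmn
    have hT1 : ∫ x, c₀ x * ((A j₀).indicator (fun _ => (1:ℝ)) x
        * ((∏ k ∈ Ioc j₀ n, e k x) * Y x)) ∂P = ∫ x, c₀ x * (π j₀ x * μ j₀ x) ∂P := by
      have h := TEL n hj₀ le_rfl
      have hWn : WW n = Y := by rw [hWW]; simp
      rwa [hWn] at h
    -- pointwise split of b * w
    have hdisj : Disjoint (range j₀) (Ioc j₀ n) := by
      rw [Finset.disjoint_left]
      intro k hk1 hk2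
      simp only [Finset.mem_range] at hk1
      simp only [Finset.mem_Ioc] at hk2
      omega
    have hsetEq : (range (n+1)).erase j₀ = range j₀ ∪ Ioc j₀ n := by
      ext k
      simp only [Finset.mem_erase, Finset.mem_range, Finset.mem_union, Finset.mem_Ioc]
      omega
    have hprodsplit : ∀ x : Ω, (∏ k ∈ (range (n+1)).erase j₀, e k x)
        = (∏ k ∈ range j₀, e k x) * ∏ k ∈ Ioc j₀ n, e k x := fun x => by
      rw [hsetEq, Finset.prod_union hdisj]
    have hptw : ∀ x : Ω, b x * w x
        = c₀ x * ((A j₀).indicator (fun _ => (1:ℝ)) x * ((∏ k ∈ Ioc j₀ n, e k x) * Y x))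
          - c₀ x * (μ j₀ x * (A j₀).indicator (fun _ => (1:ℝ)) x)
          + ∑ j ∈ Ioc j₀ n, (μ j x * (∏ k ∈ (range j).erase j₀, e k x) * w x)
              * (1 - e j x) := by
      intro x
      simp only [hb, hw, hc₀]
      rw [hprodsplit x, add_mul, sub_mul, Finset.sum_mul]
      congr 1
      · congr 1 <;> ring
      · exact Finset.sum_congr rfl fun j hj => by ring
    have hintT1 : Integrable (fun x => c₀ x * ((A j₀).indicator (fun _ => (1:ℝ)) x
        * ((∏ k ∈ Ioc j₀ n, e k x) * Y x))) P := by
      refine hInt _ ((hc₀F.mul ((hIm j₀ hj₀).mul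
        ((hprodF _ (hsub3 n le_rfl)).mul hY_meas))).aestronglyMeasurable)
        (ε⁻¹^(n+1) * (Cδ/ε^2) * (1 * (ε⁻¹^(n+1) * CY))) ?_
      filter_upwards [hc₀bd, hbe] with x h1 h2
      exact habs _ _ _ _ h1 (habs _ _ _ _ (hindabs j₀ x)
        (habs _ _ _ _ (hprodbd x h2 _ (hsub3 n le_rfl)) (hY_bd x)))
    have hintT3 : ∀ j ∈ Ioc j₀ n, Integrable
        (fun x => (μ j x * (∏ k ∈ (range j).erase j₀, e k x) * w x) * (1 - e j x)) P := by
      intro j hj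
      obtain ⟨hj1, hj2⟩ := Finset.mem_Ioc.1 hj
      refine hInt _ (((((hμF j hj2).mul (hprodF _ (hsub4 j hj2))).mul hwF).mul
        (measurable_const.sub (heF j hj2))).aestronglyMeasurable)
        (Cμ * ε⁻¹^(n+1) * (Cδ/ε^2) * (1 + ε⁻¹)) ?_
      filter_upwards [hbe, hwbd] with x hx hwx
      refine habs _ _ _ _ (habs _ _ _ _ (habs _ _ _ _ (hμ_bd j hj2 x)
        (hprodbd x hx _ (hsub4 j hj2))) hwx) ?_
      refine le_trans (habs_sub 1 (e j x)) ?_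
      rw [abs_one]
      linarith [hx j hj2]
    have hbw : ∫ x, b x * w x ∂P = 0 := by
      rw [integral_congr_ae (Filter.Eventually.of_forall hptw),
        integral_add
          (f := fun x => c₀ x * ((A j₀).indicator (fun _ => (1:ℝ)) x
            * ((∏ k ∈ Ioc j₀ n, e k x) * Y x))
            - c₀ x * (μ j₀ x * (A j₀).indicator (fun _ => (1:ℝ)) x))
          (g := fun x => ∑ j ∈ Ioc j₀ n,
            (μ j x * (∏ k ∈ (range j).erase j₀, e k x) * w x) * (1 - e j x))
          (hintT1.sub hintT2) (integrable_finset_sum _ hintT3),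
        integral_sub hintT1 hintT2, integral_finset_sum _ hintT3,
        hT1, hT2, Finset.sum_eq_zero hT3]
      simp
    have h0 : ∀ x : Ω, Fd 0 x = -(b x * w x) := fun x => by
      simp only [hFd, hw]
      ring
    calc ∫ x, Fd 0 x ∂P = ∫ x, -(b x * w x) ∂P :=
          integral_congr_ae (Filter.Eventually.of_forall h0)
      _ = - ∫ x, b x * w x ∂P := integral_neg _
      _ = 0 := by rw [hbw, neg_zero]
  -- assemble
  have haa_int : Integrable aa P := by
    refine hInt _ haaF.aestronglyMeasurable ((n+1)*(Cμ*(1+ε⁻¹)*ε⁻¹^(n+1)) + Cμ*ε⁻¹^(n+1)) ?_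
    filter_upwards [hbe] with x hx
    simp only [haa]
    refine le_trans (abs_add_le _ _) (add_le_add ?_ (habs _ _ _ _ (hμ_bd j₀ hj₀ x) (hprodbd x hx _ hsub2)))
    refine le_trans (Finset.abs_sum_le_sum_abs _ _) ?_
    refine le_trans (Finset.sum_le_sum
      (g := fun _ => Cμ * (1 + ε⁻¹) * ε⁻¹^(n+1)) fun j hj => ?_) ?_
    · have hjj : j < j₀ := Finset.mem_range.1 hj
      exact htermbd x hx j (by omega) _
        (fun k hk => by simp only [Finset.mem_range] at hk ⊢; omega)
    rw [Finset.sum_const, nsmul_eq_mul, Finset.card_range]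
    refine mul_le_mul_of_nonneg_right ?_ hCterm0
    exact_mod_cast Nat.le_succ_of_le hj₀
  have HH2 : HasDerivAt (fun r => ∫ x, b x * ff r x ∂P) 0 0 := by
    have h := HH.2
    rw [hzero] at h
    exact h
  have hfinal := (hasDerivAt_const (0:ℝ) (∫ x, aa x ∂P)).add HH2
  rw [add_zero] at hfinal
  refine HasDerivAt.congr_of_eventuallyEq hfinal ?_
  filter_upwards [Metric.ball_mem_nhds (0:ℝ) hρ] with r hr
  simp only [Pi.add_apply]
  rw [← integral_add haa_int (hintFr r hr)]
  exact integral_congr_ae (Filter.Eventually.of_forall fun x => hdecomp r x)
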